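/- Let α > 0 and δ > 0, and let G₁, G₂ be Borel probability measures on ℝ supported on the open interval (0,1), mutually absolutely continuous, whose Radon–Nikodym derivative dG₁/dG₂ equals the function r ↦ α(1−r)/r, G₂-almost everywhere. Suppose the total variation distance between G₁ and G₂, namely sup over Borel E ⊆ [0,1] of |G₁(E) − G₂(E)|, is at least δ. Let p = α/(1+α). Then there exists δ' > 0 such that β̲ + δ' < p < β̄ − δ' (where β̲, β̄ are the infimum and supremum of the common support of G₁ and G₂) and max{ G₁([0, p − δ']), 1 − G₂([0, p + δ']) } ≥ δ'. -/

import Mathlib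

open MeasureTheory

/-- The infimum of the (topological) support of a measure on `ℝ`. -/
noncomputable def suppInf (G : Measure ℝ) : ℝ := sInf {x : ℝ | G (Set.Iic x) ≠ 0}

/-- The supremum of the (topological) support of a measure on `ℝ`. -/
noncomputable def suppSup (G : Measure ℝ) : ℝ := sSup {x : ℝ | G (Set.Ici x) ≠ 0}

/-- The total variation distance between two measures on `ℝ`, as the supremum over
Borel subsets of `[0,1]` of the absolute difference of the measures. -/
noncomputable def tvDist (G₁ G₂ : Measure ℝ) : ℝ :=
  sSup {d : ℝ | ∃ E : Set ℝ, MeasurableSet E ∧ E ⊆ Set.Icc (0 : ℝ) 1 ∧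
    d = |(G₁ E).toReal - (G₂ E).toReal|}

lemma tvDist_nonpos_of_forall_eq (G₁ G₂ : Measure ℝ)
    (h : ∀ E : Set ℝ, MeasurableSet E → G₁ E = G₂ E) : tvDist G₁ G₂ ≤ 0 := by
  apply Real.sSup_le _ le_rfl
  rintro d ⟨E, hE, -, rfl⟩
  simp [h E hE]

lemma forall_eq_of_le (G₁ G₂ : Measure ℝ) [IsProbabilityMeasure G₁] [IsProbabilityMeasure G₂]
    (h : ∀ E : Set ℝ, MeasurableSet E → G₁ E ≤ G₂ E) :
    ∀ E : Set ℝ, MeasurableSet E → G₁ E = G₂ E := by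
  intro E hE
  by_contra hne
  have h1 : G₁ E < G₂ E := lt_of_le_of_ne (h E hE) hne
  have h2 : G₁ Eᶜ ≤ G₂ Eᶜ := h Eᶜ hE.compl
  have hs₁ : G₁ E + G₁ Eᶜ = 1 := by
    rw [measure_add_measure_compl hE, measure_univ]
  have hs₂ : G₂ E + G₂ Eᶜ = 1 := by
    rw [measure_add_measure_compl hE, measure_univ]
  have : (1 : ENNReal) < 1 := by
    calc (1 : ENNReal) = G₁ E + G₁ Eᶜ := hs₁.symm
      _ < G₂ E + G₂ Eᶜ := ENNReal.add_lt_add_of_lt_of_le (measure_ne_top _ _) h1 h2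
      _ = 1 := hs₂
  exact absurd this (lt_irrefl _)

/-- The Claim in the proof of Lemma A.4: if the total variation distance between
`G₁` and `G₂` is at least `δ`, then there is `δ' > 0` with
`β̲ + δ' < p < β̄ − δ'` and `max{G₁([0, p−δ']), 1 − G₂([0, p+δ'])} ≥ δ'`,
where `p = α/(1+α)`. -/
theorem bayes_tv_claim
    {α δ : ℝ} (hα : 0 < α) (hδ : 0 < δ)
    (G₁ G₂ : Measure ℝ) [IsProbabilityMeasure G₁] [IsProbabilityMeasure G₂]
    (hsupp₁ : G₁ (Set.Ioo (0 : ℝ) 1)ᶜ = 0) (hsupp₂ : G₂ (Set.Ioo (0 : ℝ) 1)ᶜ = 0)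
    (hac₁ : G₁ ≪ G₂) (hac₂ : G₂ ≪ G₁)
    (hrn : G₁.rnDeriv G₂ =ᵐ[G₂] fun r => ENNReal.ofReal (α * ((1 - r) / r)))
    (htv : δ ≤ tvDist G₁ G₂) :
    ∃ δ' > 0,
      suppInf G₁ + δ' < α / (1 + α) ∧ α / (1 + α) < suppSup G₁ - δ' ∧
      δ' ≤ max (G₁ (Set.Icc 0 (α / (1 + α) - δ'))).toReal
              (1 - (G₂ (Set.Icc 0 (α / (1 + α) + δ'))).toReal) := by
  set p : ℝ := α / (1 + α) with hpdef
  have hα1 : (0 : ℝ) < 1 + α := by linarith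
  have hp0 : 0 < p := div_pos hα hα1
  have hp1 : p < 1 := by rw [hpdef, div_lt_one hα1]; linarith
  have hpα : p * (1 + α) = α := div_mul_cancel₀ _ (ne_of_gt hα1)
  have hmem₂ : ∀ᵐ x ∂G₂, x ∈ Set.Ioo (0 : ℝ) 1 := by
    rw [ae_iff]; exact hsupp₂
  -- Step 1: G₁ (Ioo 0 p) ≠ 0
  have hlow : G₁ (Set.Ioo 0 p) ≠ 0 := by
    intro h0
    have h0' : G₂ (Set.Ioo 0 p) = 0 := hac₂ h0
    have hnot : ∀ᵐ x ∂G₂, x ∉ Set.Ioo 0 p := by rw [ae_iff]; simp only [not_not, Set.setOf_mem_eq]; exact h0'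
    have hae : ∀ᵐ x ∂G₂, G₁.rnDeriv G₂ x ≤ 1 := by
      filter_upwards [hmem₂, hnot, hrn] with x hx hnx hxr
      rw [hxr]
      have hxp : p ≤ x := by
        by_contra hc; push_neg at hc; exact hnx ⟨hx.1, hc⟩
      have hx0 : 0 < x := hx.1
      have hle1 : α * ((1 - x) / x) ≤ 1 := by
        rw [mul_div_assoc']
        rw [div_le_one hx0]
        nlinarith [mul_le_mul_of_nonneg_right hxp (le_of_lt hα1)]
      exact ENNReal.ofReal_le_one.mpr hle1
    have hle : ∀ E : Set ℝ, MeasurableSet E → G₁ E ≤ G₂ E := by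
      intro E hE
      rw [← Measure.setLIntegral_rnDeriv' hac₁ hE]
      calc ∫⁻ x in E, G₁.rnDeriv G₂ x ∂G₂ ≤ ∫⁻ _ in E, 1 ∂G₂ :=
            lintegral_mono_ae (ae_restrict_of_ae hae)
        _ = G₂ E := by simp
    have := tvDist_nonpos_of_forall_eq G₁ G₂ (forall_eq_of_le G₁ G₂ hle)
    linarith
  -- Step 2: G₁ (Ioo p 1) ≠ 0
  have hhigh : G₁ (Set.Ioo p 1) ≠ 0 := by
    intro h0
    have h0' : G₂ (Set.Ioo p 1) = 0 := hac₂ h0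
    have hnot : ∀ᵐ x ∂G₂, x ∉ Set.Ioo p 1 := by rw [ae_iff]; simp only [not_not, Set.setOf_mem_eq]; exact h0'
    have hae : ∀ᵐ x ∂G₂, 1 ≤ G₁.rnDeriv G₂ x := by
      filter_upwards [hmem₂, hnot, hrn] with x hx hnx hxr
      rw [hxr]
      have hxp : x ≤ p := by
        by_contra hc; push_neg at hc; exact hnx ⟨hc, hx.2⟩
      have hx0 : 0 < x := hx.1
      have hge1 : 1 ≤ α * ((1 - x) / x) := by
        rw [mul_div_assoc']
        rw [le_div_iff₀ hx0]
        nlinarith [mul_le_mul_of_nonneg_right hxp (le_of_lt hα1)]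
      exact ENNReal.one_le_ofReal.mpr hge1
    have hle : ∀ E : Set ℝ, MeasurableSet E → G₂ E ≤ G₁ E := by
      intro E hE
      rw [← Measure.setLIntegral_rnDeriv' hac₁ hE]
      calc G₂ E = ∫⁻ _ in E, 1 ∂G₂ := by simp
        _ ≤ ∫⁻ x in E, G₁.rnDeriv G₂ x ∂G₂ := lintegral_mono_ae (ae_restrict_of_ae hae)
    have := tvDist_nonpos_of_forall_eq G₂ G₁ (forall_eq_of_le G₂ G₁ hle)
    have := tvDist_nonpos_of_forall_eq G₁ G₂
      (fun E hE => (forall_eq_of_le G₂ G₁ hle E hE).symm)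
    linarith
  -- negative reals and [1,∞) are null for G₁
  have hIio0 : G₁ (Set.Iio (0 : ℝ)) = 0 := by
    refine measure_mono_null ?_ hsupp₁
    intro x hx
    simp only [Set.mem_compl_iff, Set.mem_Ioo, not_and, not_lt]
    intro h
    exact absurd h (not_lt.mpr (le_of_lt hx))
  -- Step 3: find ε₁ > 0 with G₁ (Icc 0 (p - ε₁)) ≠ 0
  have hsub : Set.Ioo (0 : ℝ) p ⊆ ⋃ n : ℕ, Set.Iic (p - 1 / (n + 1)) := by
    intro x hx
    obtain ⟨n, hn⟩ := exists_nat_one_div_lt (sub_pos.mpr hx.2)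
    exact Set.mem_iUnion.mpr ⟨n, by simp only [Set.mem_Iic]; linarith⟩
  have hU : G₁ (⋃ n : ℕ, Set.Iic (p - 1 / (n + 1))) ≠ 0 :=
    fun h => hlow (measure_mono_null hsub h)
  obtain ⟨n₁, hn₁⟩ : ∃ n : ℕ, G₁ (Set.Iic (p - 1 / (n + 1))) ≠ 0 := by
    by_contra hc; push_neg at hc
    exact hU (measure_iUnion_null_iff.mpr hc)
  set ε₁ : ℝ := 1 / (n₁ + 1) with hε₁def
  have hε₁ : 0 < ε₁ := by positivity
  have hIcc₁ : G₁ (Set.Icc 0 (p - ε₁)) ≠ 0 := by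
    intro h
    apply hn₁
    have : Set.Iic (p - ε₁) ⊆ Set.Iio 0 ∪ Set.Icc 0 (p - ε₁) := by
      intro x hx
      rcases lt_or_ge x 0 with h' | h'
      · exact Or.inl h'
      · exact Or.inr ⟨h', hx⟩
    exact measure_mono_null this (by
      refine measure_union_null hIio0 h)
  -- Step 4: find ε₂ > 0 with G₁ (Ici (p + ε₂)) ≠ 0
  have hsub₂ : Set.Ioo p 1 ⊆ ⋃ n : ℕ, Set.Ici (p + 1 / (n + 1)) := by
    intro x hx
    obtain ⟨n, hn⟩ := exists_nat_one_div_lt (sub_pos.mpr hx.1)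
    exact Set.mem_iUnion.mpr ⟨n, by simp only [Set.mem_Ici]; linarith⟩
  have hU₂ : G₁ (⋃ n : ℕ, Set.Ici (p + 1 / (n + 1))) ≠ 0 :=
    fun h => hhigh (measure_mono_null hsub₂ h)
  obtain ⟨n₂, hn₂⟩ : ∃ n : ℕ, G₁ (Set.Ici (p + 1 / (n + 1))) ≠ 0 := by
    by_contra hc; push_neg at hc
    exact hU₂ (measure_iUnion_null_iff.mpr hc)
  set ε₂ : ℝ := 1 / (n₂ + 1) with hε₂def
  have hε₂ : 0 < ε₂ := by positivity
  -- bounds on suppInf / suppSup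
  have hbdd₁ : BddBelow {x : ℝ | G₁ (Set.Iic x) ≠ 0} := by
    refine ⟨0, fun x hx => ?_⟩
    by_contra hc; push_neg at hc
    exact hx (measure_mono_null (fun y hy => lt_of_le_of_lt hy hc) hIio0)
  have hinf : suppInf G₁ ≤ p - ε₁ := csInf_le hbdd₁ hn₁
  have hbdd₂ : BddAbove {x : ℝ | G₁ (Set.Ici x) ≠ 0} := by
    refine ⟨1, fun x hx => ?_⟩
    by_contra hc; push_neg at hc
    refine hx (measure_mono_null (fun y hy => ?_) hsupp₁)
    simp only [Set.mem_compl_iff, Set.mem_Ioo]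
    intro h
    exact absurd h.2 (not_lt.mpr (le_trans (le_of_lt hc) hy))
  have hsup : p + ε₂ ≤ suppSup G₁ := le_csSup hbdd₂ hn₂
  -- Step 5: choose δ'
  set m : ℝ := (G₁ (Set.Icc 0 (p - ε₁))).toReal with hmdef
  have hm : 0 < m := ENNReal.toReal_pos hIcc₁ (measure_ne_top _ _)
  refine ⟨min ε₁ (min ε₂ m) / 2, by positivity, ?_, ?_, ?_⟩
  · have h1 : min ε₁ (min ε₂ m) / 2 < ε₁ := by
      have := min_le_left ε₁ (min ε₂ m); linarith
    linarith
  · have h2 : min ε₁ (min ε₂ m) / 2 < ε₂ := by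
      have := (min_le_right ε₁ (min ε₂ m)).trans (min_le_left ε₂ m); linarith
    linarith
  · refine le_trans ?_ (le_max_left _ _)
    have hd₁ : min ε₁ (min ε₂ m) / 2 ≤ ε₁ := by
      have := min_le_left ε₁ (min ε₂ m); linarith
    have hdm : min ε₁ (min ε₂ m) / 2 ≤ m := by
      have := (min_le_right ε₁ (min ε₂ m)).trans (min_le_right ε₂ m); linarith
    refine hdm.trans ?_
    rw [hmdef]
    exact ENNReal.toReal_mono (measure_ne_top _ _)
      (measure_mono (Set.Icc_subset_Icc_right (by linarith)))
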